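/- Suppose the sequence {y_n} is bounded above, A > 0, and there exists a positive integer η such that for every sequence {c_m}_{m=1}^∞ with c_m ∈ I_β for all m, there exist positive integers N1 ≤ N2 ≤ η with Σ_{m=N1}^{N2} c_m ∈ I_B. Then there exist M > 0 and N ∈ ℕ such that x_n ≤ M for all n > N. -/

import Mathlib

open Finset

noncomputable def indexSet (k : ℕ) (f : ℕ → ℝ) : Finset ℕ :=
  (Finset.Icc 1 k).filter fun i => 0 < f i

def iterCond (η : ℕ) (S T : Finset ℕ) : Prop :=
  ∀ c : ℕ → ℕ, (∀ m, 1 ≤ m → c m ∈ S) →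
    ∃ N1 N2 : ℕ, 0 < N1 ∧ N1 ≤ N2 ∧ N2 ≤ η ∧ (∑ m ∈ Finset.Icc N1 N2, c m) ∈ T

private lemma iterate_affine_le (a bb : ℝ) (ha : 0 ≤ a) (hb : 0 ≤ bb) :
    ∀ (m : ℕ) (t : ℝ), 0 ≤ t → (fun u => a * u + bb)^[m] t ≤ (a + 1) ^ m * (t + bb) := by
  intro m
  induction m with
  | zero => intro t ht; simpa using by linarith
  | succ m ih =>
    intro t ht
    rw [Function.iterate_succ_apply']
    have h1 := ih t ht
    have h2 : (1:ℝ) ≤ (a+1)^m := one_le_pow₀ (by linarith)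
    have h3 : bb ≤ (a+1)^m * (t + bb) := by nlinarith
    have h4 : a * (fun u => a * u + bb)^[m] t ≤ a * ((a+1)^m * (t+bb)) :=
      mul_le_mul_of_nonneg_left h1 ha
    show a * (fun u => a * u + bb)^[m] t + bb ≤ _
    calc a * (fun u => a * u + bb)^[m] t + bb
        ≤ a * ((a+1)^m * (t+bb)) + (a+1)^m*(t+bb) := by linarith
      _ = (a+1)^(m+1) * (t+bb) := by ring

private lemma iterate_inv_le (g h : ℝ → ℝ) (hg : Monotone g) (hgh : ∀ t, g (h t) = t) :
    ∀ (m : ℕ) (t s : ℝ), h^[m] t ≤ s → t ≤ g^[m] s := by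
  intro m
  induction m with
  | zero => intro t s hts; simpa using hts
  | succ m ih =>
    intro t s hts
    have h2 : h^[m] (h t) ≤ s := by rwa [← Function.iterate_succ_apply]
    have h3 : h t ≤ g^[m] s := ih (h t) s h2
    calc t = g (h t) := (hgh t).symm
      _ ≤ g (g^[m] s) := hg h3
      _ = g^[m+1] s := (Function.iterate_succ_apply' g m s).symm

set_option maxHeartbeats 1600000 in
theorem stmt_10
    (k : ℕ) (hk : 0 < k)
    (α A p q : ℝ) (β γ B C δ ε D E : ℕ → ℝ)
    (hα : 0 ≤ α) (hA : 0 ≤ A) (hp : 0 ≤ p) (hq : 0 ≤ q)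
    (hβ : ∀ i, 0 ≤ β i) (hγ : ∀ i, 0 ≤ γ i) (hB : ∀ j, 0 ≤ B j) (hC : ∀ j, 0 ≤ C j)
    (hδ : ∀ i, 0 ≤ δ i) (hε : ∀ i, 0 ≤ ε i) (hD : ∀ j, 0 ≤ D j) (hE : ∀ j, 0 ≤ E j)
    (x y : ℕ → ℝ)
    (hxnn : ∀ n, 0 ≤ x n) (hynn : ∀ n, 0 ≤ y n)
    (hxden : ∀ n, k ≤ n →
      0 < A + ∑ j ∈ Icc 1 k, B j * x (n - j) + ∑ j ∈ Icc 1 k, C j * y (n - j))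
    (hyden : ∀ n, k ≤ n →
      0 < q + ∑ j ∈ Icc 1 k, D j * x (n - j) + ∑ j ∈ Icc 1 k, E j * y (n - j))
    (hxrec : ∀ n, k ≤ n → x n =
      (α + ∑ i ∈ Icc 1 k, β i * x (n - i) + ∑ i ∈ Icc 1 k, γ i * y (n - i)) /
      (A + ∑ j ∈ Icc 1 k, B j * x (n - j) + ∑ j ∈ Icc 1 k, C j * y (n - j)))
    (hyrec : ∀ n, k ≤ n → y n =
      (p + ∑ i ∈ Icc 1 k, δ i * x (n - i) + ∑ i ∈ Icc 1 k, ε i * y (n - i)) /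
      (q + ∑ j ∈ Icc 1 k, D j * x (n - j) + ∑ j ∈ Icc 1 k, E j * y (n - j)))
    (m3 : ℝ) (hybd : ∀ n, y n ≤ m3)
    (hApos : 0 < A)
    (hη : ∃ η : ℕ, 0 < η ∧ iterCond η (indexSet k β) (indexSet k B)) :
    ∃ M : ℝ, 0 < M ∧ ∃ N : ℕ, ∀ n, N < n → x n ≤ M := by
  obtain ⟨η, hηpos, hiter⟩ := hη
  have hm3 : 0 ≤ m3 := le_trans (hynn 0) (hybd 0)
  obtain ⟨Sγ, hSγdef⟩ : ∃ t : ℝ, t = ∑ i ∈ Icc 1 k, γ i := ⟨_, rfl⟩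
  have hSγ0 : 0 ≤ Sγ := hSγdef ▸ Finset.sum_nonneg fun i _ => hγ i
  obtain ⟨C0, hC0def⟩ : ∃ t : ℝ, t = α + Sγ * m3 := ⟨_, rfl⟩
  have hC00 : 0 ≤ C0 := by rw [hC0def]; positivity
  obtain ⟨b, hbdef⟩ : ∃ t : ℝ, t = ∑ i ∈ Icc 1 k, β i := ⟨_, rfl⟩
  have hb0 : 0 ≤ b := hbdef ▸ Finset.sum_nonneg fun i _ => hβ i
  have h1k : (1 : ℕ) ∈ Icc 1 k := Finset.mem_Icc.mpr ⟨le_rfl, hk⟩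
  -- numerator bound by C0 + β-sum
  have hnum_le : ∀ n, k ≤ n →
      α + ∑ i ∈ Icc 1 k, β i * x (n - i) + ∑ i ∈ Icc 1 k, γ i * y (n - i)
        ≤ C0 + ∑ i ∈ Icc 1 k, β i * x (n - i) := by
    intro n hn
    have h1 : ∑ i ∈ Icc 1 k, γ i * y (n - i) ≤ ∑ i ∈ Icc 1 k, γ i * m3 :=
      Finset.sum_le_sum fun i _ => mul_le_mul_of_nonneg_left (hybd _) (hγ i)
    have h2 : ∑ i ∈ Icc 1 k, γ i * m3 = Sγ * m3 := by rw [hSγdef, Finset.sum_mul]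
    rw [hC0def]; linarith
  have hnum_nn : ∀ n, k ≤ n →
      0 ≤ α + ∑ i ∈ Icc 1 k, β i * x (n - i) + ∑ i ∈ Icc 1 k, γ i * y (n - i) := by
    intro n hn
    have h1 : 0 ≤ ∑ i ∈ Icc 1 k, β i * x (n - i) :=
      Finset.sum_nonneg fun i _ => mul_nonneg (hβ i) (hxnn _)
    have h2 : 0 ≤ ∑ i ∈ Icc 1 k, γ i * y (n - i) :=
      Finset.sum_nonneg fun i _ => mul_nonneg (hγ i) (hynn _)
    linarith
  have hden_ge : ∀ n, k ≤ n → ∀ s ∈ Icc 1 k,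
      A + B s * x (n - s) ≤
      A + ∑ j ∈ Icc 1 k, B j * x (n - j) + ∑ j ∈ Icc 1 k, C j * y (n - j) := by
    intro n hn s hs
    have h1 : B s * x (n - s) ≤ ∑ j ∈ Icc 1 k, B j * x (n - j) :=
      Finset.single_le_sum (f := fun j => B j * x (n - j))
        (fun j _ => mul_nonneg (hB j) (hxnn _)) hs
    have h2 : 0 ≤ ∑ j ∈ Icc 1 k, C j * y (n - j) :=
      Finset.sum_nonneg fun j _ => mul_nonneg (hC j) (hynn _)
    linarith
  have key1 : ∀ n, k ≤ n → A * x n ≤ C0 + ∑ i ∈ Icc 1 k, β i * x (n - i) := by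
    intro n hn
    have hdA : A ≤ A + ∑ j ∈ Icc 1 k, B j * x (n - j) + ∑ j ∈ Icc 1 k, C j * y (n - j) := by
      have h3 := hden_ge n hn 1 h1k
      have h1 : 0 ≤ B 1 * x (n - 1) := mul_nonneg (hB 1) (hxnn _)
      linarith
    have hx : x n ≤ (α + ∑ i ∈ Icc 1 k, β i * x (n - i) + ∑ i ∈ Icc 1 k, γ i * y (n - i)) / A := by
      rw [hxrec n hn]
      exact div_le_div_of_nonneg_left (hnum_nn n hn) hApos hdA
    have hx2 : x n * A ≤ α + ∑ i ∈ Icc 1 k, β i * x (n - i) + ∑ i ∈ Icc 1 k, γ i * y (n - i) :=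
      (le_div_iff₀ hApos).mp hx
    have h4 := hnum_le n hn
    linarith [hx2]
  have key2 : ∀ n, k ≤ n → ∀ s ∈ Icc 1 k,
      x n * (A + B s * x (n - s)) ≤ C0 + ∑ i ∈ Icc 1 k, β i * x (n - i) := by
    intro n hn s hs
    have hden := hxden n hn
    have hxd : x n * (A + ∑ j ∈ Icc 1 k, B j * x (n - j) + ∑ j ∈ Icc 1 k, C j * y (n - j))
        = α + ∑ i ∈ Icc 1 k, β i * x (n - i) + ∑ i ∈ Icc 1 k, γ i * y (n - i) := by
      rw [hxrec n hn]; field_simp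
    have h1 := hden_ge n hn s hs
    have h2 : x n * (A + B s * x (n - s)) ≤
        x n * (A + ∑ j ∈ Icc 1 k, B j * x (n - j) + ∑ j ∈ Icc 1 k, C j * y (n - j)) :=
      mul_le_mul_of_nonneg_left h1 (hxnn n)
    have h3 := hnum_le n hn
    linarith
  by_cases hne : (indexSet k β).Nonempty
  · -- main case
    obtain ⟨i0, hi0⟩ := hne
    have hi0' : i0 ∈ Icc 1 k ∧ 0 < β i0 := Finset.mem_filter.mp hi0
    have hIB_ne : (indexSet k B).Nonempty := by
      obtain ⟨N1, N2, _, _, _, hmem⟩ := hiter (fun _ => i0) (fun _ _ => hi0)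
      exact ⟨_, hmem⟩
    obtain ⟨βmax, hβmaxdef⟩ : ∃ t : ℝ, t = (Icc 1 k).sup' ⟨1, h1k⟩ β := ⟨_, rfl⟩
    have hβmax_le : ∀ i ∈ Icc 1 k, β i ≤ βmax := fun i hi => hβmaxdef ▸ Finset.le_sup' β hi
    have hβmax_pos : 0 < βmax := lt_of_lt_of_le hi0'.2 (hβmax_le i0 hi0'.1)
    have hkR : (0:ℝ) < (k:ℝ) := by exact_mod_cast hk
    have hkβ : (0:ℝ) < k * βmax := by positivity
    obtain ⟨Bmin, hBmindef⟩ : ∃ t : ℝ, t = (indexSet k B).inf' hIB_ne B := ⟨_, rfl⟩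
    have hBmin_pos : 0 < Bmin := by
      rw [hBmindef, Finset.lt_inf'_iff]
      intro j hj
      exact (Finset.mem_filter.mp hj).2
    have hBmin_le : ∀ j ∈ indexSet k B, Bmin ≤ B j := fun j hj => hBmindef ▸ Finset.inf'_le B hj
    obtain ⟨Ca, hCadef⟩ : ∃ t : ℝ, t = C0 / A := ⟨_, rfl⟩
    have hCa0 : 0 ≤ Ca := by rw [hCadef]; positivity
    have hACa : A * Ca = C0 := by rw [hCadef]; field_simp
    obtain ⟨σ, hσdef⟩ : ∃ t : ℝ, t = k * βmax / A + 1 := ⟨_, rfl⟩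
    have hσ1 : 1 ≤ σ := by
      have h1 : 0 ≤ k * βmax / A := by positivity
      rw [hσdef]; linarith
    obtain ⟨P, hPdef⟩ : ∃ t : ℝ, t = σ ^ η := ⟨_, rfl⟩
    have hP1 : 1 ≤ P := hPdef ▸ one_le_pow₀ hσ1
    obtain ⟨N0, hN0def⟩ : ∃ t : ℕ, t = k * (η + 1) := ⟨_, rfl⟩
    have hN0pos : 0 < N0 := by rw [hN0def]; exact Nat.mul_pos hk (by omega)
    obtain ⟨Minit, hMinitdef⟩ : ∃ t : ℝ, t = (Finset.range N0).sup'
        ⟨0, Finset.mem_range.mpr hN0pos⟩ x := ⟨_, rfl⟩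
    have hMinit_le : ∀ j ∈ Finset.range N0, x j ≤ Minit := fun j hj =>
      hMinitdef ▸ Finset.le_sup' x hj
    have hMinit_nn : 0 ≤ Minit :=
      le_trans (hxnn 0) (hMinit_le 0 (Finset.mem_range.mpr hN0pos))
    obtain ⟨K2, hK2def⟩ : ∃ t : ℝ, t = P * Ca + Minit + 1 := ⟨_, rfl⟩
    have hPCa : 0 ≤ P * Ca := mul_nonneg (by linarith) hCa0
    have hK20 : 1 ≤ K2 := by rw [hK2def]; linarith
    obtain ⟨E0, hE0def⟩ : ∃ t : ℝ,
        t = max (Ca + 1) (max 1 ((b * P + C0 + b * K2 + 1) / Bmin)) := ⟨_, rfl⟩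
    have hE01 : 1 ≤ E0 := hE0def ▸ le_trans (le_max_left 1 _) (le_max_right _ _)
    have hE0Ca : Ca + 1 ≤ E0 := hE0def ▸ le_max_left _ _
    have hE0B : b * P + C0 + b * K2 + 1 ≤ Bmin * E0 := by
      have h1 : (b * P + C0 + b * K2 + 1) / Bmin ≤ E0 :=
        hE0def ▸ le_trans (le_max_right 1 _) (le_max_right _ _)
      calc b * P + C0 + b * K2 + 1 = Bmin * ((b * P + C0 + b * K2 + 1) / Bmin) := by
            field_simp
        _ ≤ Bmin * E0 := mul_le_mul_of_nonneg_left h1 hBmin_pos.le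
    obtain ⟨M, hMdef⟩ : ∃ t : ℝ, t = P * E0 + K2 := ⟨_, rfl⟩
    have hPE0 : 1 ≤ P * E0 := by
      have h1 : (1:ℝ) * 1 ≤ P * E0 := mul_le_mul hP1 hE01 zero_le_one (by linarith)
      linarith
    have hM1 : 1 ≤ M := by rw [hMdef]; linarith
    have hMinitM : Minit ≤ M := by
      rw [hMdef, hK2def]; linarith
    have hfin : C0 + b * M < E0 * (A + Bmin * E0) := by
      have h1 : (b * P + C0 + b * K2 + 1) * E0 ≤ (Bmin * E0) * E0 :=
        mul_le_mul_of_nonneg_right hE0B (by linarith)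
      have h2 : 0 < A * E0 := mul_pos hApos (by linarith)
      have h3 : 0 ≤ (E0 - 1) * C0 := mul_nonneg (by linarith) hC00
      have h4 : 0 ≤ (E0 - 1) * (b * K2) :=
        mul_nonneg (by linarith) (mul_nonneg hb0 (by linarith))
      rw [hMdef]
      linarith [h1, h2, h3, h4, hE01]
    -- the functions g and h
    obtain ⟨g, hgdef⟩ : ∃ t : ℝ → ℝ, t = fun u => (A * u - C0) / (k * βmax) := ⟨_, rfl⟩
    obtain ⟨h, hhdef⟩ : ∃ t : ℝ → ℝ, t = fun u => (k * βmax / A) * u + Ca := ⟨_, rfl⟩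
    have hgapp : ∀ t, g t = (A * t - C0) / (k * βmax) := fun t => by rw [hgdef]
    have hgmono : Monotone g := by
      intro a1 a2 h12
      rw [hgapp, hgapp]
      apply div_le_div_of_nonneg_right ?_ hkβ.le
      have h13 := mul_le_mul_of_nonneg_left h12 hA
      linarith
    have hgh : ∀ t, g (h t) = t := by
      intro t
      rw [hhdef]
      simp only
      rw [hgapp, hCadef]
      field_simp
      ring
    have hhiter : ∀ m, m ≤ η → h^[m] E0 ≤ M := by
      intro m hm
      have h1 : h^[m] E0 ≤ (k * βmax / A + 1) ^ m * (E0 + Ca) := by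
        rw [hhdef]
        exact iterate_affine_le (k * βmax / A) Ca (by positivity) hCa0 m E0 (by linarith)
      have h2 : (k * βmax / A + 1) ^ m ≤ P := by
        rw [hPdef, ← hσdef]
        exact pow_le_pow_right₀ hσ1 hm
      have h3 : (k * βmax / A + 1) ^ m * (E0 + Ca) ≤ P * (E0 + Ca) :=
        mul_le_mul_of_nonneg_right h2 (by linarith)
      have h5 : P * (E0 + Ca) = P * E0 + P * Ca := by ring
      rw [hMdef, hK2def]
      linarith
    -- main induction
    have main : ∀ n, x n ≤ M := by
      intro n
      induction n using Nat.strong_induction_on with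
      | _ n IH =>
      by_cases hsmall : n < N0
      · exact le_trans (hMinit_le n (Finset.mem_range.mpr hsmall)) hMinitM
      push_neg at hsmall
      have hkN0 : k ≤ N0 := by
        rw [hN0def]; exact Nat.le_mul_of_pos_right k (by omega)
      have hnk : k ≤ n := le_trans hkN0 hsmall
      have hηkN0 : η * k + k ≤ N0 := by
        rw [hN0def, Nat.mul_add, Nat.mul_one, Nat.mul_comm k η]
      by_contra hxn
      push_neg at hxn
      have hfact : ∀ m, m ≤ η → E0 ≤ g^[m] (x n) := by
        intro m hm
        exact iterate_inv_le g h hgmono hgh m E0 (x n) (le_trans (hhiter m hm) hxn.le)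
      -- chain construction
      have chain : ∀ m, m ≤ η → ∃ c : ℕ → ℕ, (∀ j, 1 ≤ j → c j ∈ indexSet k β) ∧
          ∀ l, l ≤ m → g^[l] (x n) ≤ x (n - ∑ j ∈ Icc 1 l, c j) := by
        intro m
        induction m with
        | zero =>
          intro _
          refine ⟨fun _ => i0, fun j _ => hi0, ?_⟩
          intro l hl
          have hl0 : l = 0 := by omega
          subst hl0
          simp
        | succ m ih =>
          intro hm1
          obtain ⟨c, hc1, hc2⟩ := ih (by omega)
          have hcle : ∀ j, 1 ≤ j → c j ≤ k := by
            intro j hj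
            exact (Finset.mem_Icc.mp (Finset.mem_filter.mp (hc1 j hj)).1).2
          have hSk : ∑ j ∈ Icc 1 m, c j ≤ m * k := by
            calc ∑ j ∈ Icc 1 m, c j ≤ ∑ _j ∈ Icc 1 m, k :=
                  Finset.sum_le_sum fun j hj => hcle j (Finset.mem_Icc.mp hj).1
              _ = m * k := by simp [Nat.card_Icc, mul_comm]
          have hmη : m * k ≤ η * k := Nat.mul_le_mul_right k (by omega)
          have hnm : k ≤ n - ∑ j ∈ Icc 1 m, c j := by omega
          obtain ⟨nm, hnmdef⟩ : ∃ t : ℕ, t = n - ∑ j ∈ Icc 1 m, c j := ⟨_, rfl⟩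
          rw [← hnmdef] at hnm
          have hG : g^[m] (x n) ≤ x nm := hnmdef ▸ hc2 m le_rfl
          have hEm : E0 ≤ g^[m] (x n) := hfact m (by omega)
          have hExm : E0 ≤ x nm := le_trans hEm hG
          have hk1 := key1 nm hnm
          have hposnum : 0 < A * x nm - C0 := by
            have h6 : A * (Ca + 1) ≤ A * x nm :=
              mul_le_mul_of_nonneg_left (le_trans hE0Ca hExm) hApos.le
            have h7 : A * (Ca + 1) = A * Ca + A := by ring
            linarith [hACa]
          have havg : ∃ i ∈ Icc 1 k, (A * x nm - C0) / k ≤ β i * x (nm - i) := by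
            apply Finset.exists_le_of_sum_le ⟨1, h1k⟩
            have hcard : ((Icc 1 k).card : ℝ) = (k : ℝ) := by
              simp [Nat.card_Icc]
            have h7 : ∑ _i ∈ Icc 1 k, (A * x nm - C0) / k = A * x nm - C0 := by
              rw [Finset.sum_const, nsmul_eq_mul, hcard]
              field_simp
            rw [h7]
            linarith [hk1]
          obtain ⟨i, hik, hi⟩ := havg
          have hβi : 0 < β i := by
            rcases lt_or_ge 0 (β i) with h' | h'
            · exact h'
            · exfalso
              have hβ0 : β i = 0 := le_antisymm h' (hβ i)
              rw [hβ0, zero_mul] at hi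
              have : 0 < (A * x nm - C0) / k := by positivity
              linarith
          have hxi : (A * x nm - C0) / (k * βmax) ≤ x (nm - i) := by
            rw [div_le_iff₀ hkβ]
            have h8 : A * x nm - C0 ≤ k * (β i * x (nm - i)) := by
              rw [div_le_iff₀ hkR] at hi
              linarith
            have h9 : β i * x (nm - i) ≤ βmax * x (nm - i) :=
              mul_le_mul_of_nonneg_right (hβmax_le i hik) (hxnn _)
            have h10 : (k:ℝ) * (β i * x (nm - i)) ≤ k * (βmax * x (nm - i)) :=
              mul_le_mul_of_nonneg_left h9 hkR.le
            have h11 : (k:ℝ) * (βmax * x (nm - i)) = x (nm - i) * (k * βmax) := by ring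
            linarith
          refine ⟨Function.update c (m+1) i, ?_, ?_⟩
          · intro j hj
            rcases eq_or_ne j (m+1) with rfl | hne'
            · rw [Function.update_self]
              exact Finset.mem_filter.mpr ⟨hik, hβi⟩
            · rw [Function.update_of_ne hne']
              exact hc1 j hj
          · intro l hl
            have hsum_eq : ∀ l', l' ≤ m →
                ∑ j ∈ Icc 1 l', Function.update c (m+1) i j = ∑ j ∈ Icc 1 l', c j := by
              intro l' hl'
              apply Finset.sum_congr rfl
              intro j hj
              have hj' : j ≠ m + 1 := by
                have := (Finset.mem_Icc.mp hj).2
                omega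
              exact Function.update_of_ne hj' _ _
            rcases Nat.lt_succ_iff_lt_or_eq.mp (Nat.lt_succ_of_le hl) with h' | rfl
            · rw [hsum_eq l (by omega)]
              exact hc2 l (by omega)
            · rw [Finset.sum_Icc_succ_top (by omega : 1 ≤ m + 1), hsum_eq m le_rfl,
                Function.update_self]
              have heq : n - (∑ j ∈ Icc 1 m, c j + i) = nm - i := by omega
              rw [heq]
              calc g^[m+1] (x n) = g (g^[m] (x n)) := Function.iterate_succ_apply' g m (x n)
                _ ≤ g (x nm) := hgmono hG
                _ = (A * x nm - C0) / (k * βmax) := hgapp _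
                _ ≤ x (nm - i) := hxi
      obtain ⟨c, hc1, hc2⟩ := chain η le_rfl
      obtain ⟨N1, N2, hN1, hN12, hN2η, hsmem⟩ := hiter c hc1
      obtain ⟨s, hsdef⟩ : ∃ t : ℕ, t = ∑ m' ∈ Icc N1 N2, c m' := ⟨_, rfl⟩
      rw [← hsdef] at hsmem
      have hs_split : (∑ j ∈ Icc 1 (N1-1), c j) + s = ∑ j ∈ Icc 1 N2, c j := by
        have e1 : Icc 1 (N1-1) = Ioc 0 (N1-1) := Finset.Icc_add_one_left_eq_Ioc 0 (N1-1)
        have e2 : Icc N1 N2 = Ioc (N1-1) N2 := by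
          rw [← Finset.Icc_add_one_left_eq_Ioc]
          congr 1
          omega
        have e3 : Icc 1 N2 = Ioc 0 N2 := Finset.Icc_add_one_left_eq_Ioc 0 N2
        rw [hsdef, e1, e2, e3]
        exact Finset.sum_Ioc_consecutive c (Nat.zero_le _) (by omega)
      have hcle : ∀ j, 1 ≤ j → c j ≤ k := by
        intro j hj
        exact (Finset.mem_Icc.mp (Finset.mem_filter.mp (hc1 j hj)).1).2
      have hSbound : ∀ l, l ≤ η → ∑ j ∈ Icc 1 l, c j ≤ η * k := by
        intro l hl
        calc ∑ j ∈ Icc 1 l, c j ≤ ∑ _j ∈ Icc 1 l, k :=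
              Finset.sum_le_sum fun j hj => hcle j (Finset.mem_Icc.mp hj).1
          _ = l * k := by simp [Nat.card_Icc, mul_comm]
          _ ≤ η * k := Nat.mul_le_mul_right k hl
      obtain ⟨S1, hS1def⟩ : ∃ t : ℕ, t = ∑ j ∈ Icc 1 (N1-1), c j := ⟨_, rfl⟩
      obtain ⟨n', hn'def⟩ : ∃ t : ℕ, t = n - S1 := ⟨_, rfl⟩
      have hS1b : S1 ≤ η * k := hS1def ▸ hSbound (N1-1) (by omega)
      have hn'k : k ≤ n' := by omega
      have hE1 : E0 ≤ x n' := by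
        rw [hn'def, hS1def]
        exact le_trans (hfact (N1-1) (by omega)) (hc2 (N1-1) (by omega))
      have hE2 : E0 ≤ x (n - ∑ j ∈ Icc 1 N2, c j) :=
        le_trans (hfact N2 hN2η) (hc2 N2 hN2η)
      have hn's : n' - s = n - ∑ j ∈ Icc 1 N2, c j := by
        rw [hn'def, Nat.sub_sub, hS1def, hs_split]
      have hsmem' : s ∈ Icc 1 k ∧ 0 < B s := Finset.mem_filter.mp hsmem
      have hk2 := key2 n' hn'k s hsmem'.1
      have hxM : ∀ i ∈ Icc 1 k, x (n' - i) ≤ M := by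
        intro i hi
        have hi1 := (Finset.mem_Icc.mp hi).1
        apply IH
        omega
      have hnum : ∑ i ∈ Icc 1 k, β i * x (n' - i) ≤ b * M := by
        calc ∑ i ∈ Icc 1 k, β i * x (n' - i) ≤ ∑ i ∈ Icc 1 k, β i * M :=
              Finset.sum_le_sum fun i hi => mul_le_mul_of_nonneg_left (hxM i hi) (hβ i)
          _ = b * M := by rw [hbdef, Finset.sum_mul]
      have hBsmin : Bmin * E0 ≤ B s * x (n' - s) := by
        rw [hn's]
        calc Bmin * E0 ≤ B s * E0 := mul_le_mul_of_nonneg_right (hBmin_le s hsmem) (by linarith)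
          _ ≤ B s * x (n - ∑ j ∈ Icc 1 N2, c j) :=
              mul_le_mul_of_nonneg_left hE2 hsmem'.2.le
      have hlow : E0 * (A + Bmin * E0) ≤ x n' * (A + B s * x (n' - s)) := by
        apply mul_le_mul hE1 (by linarith) ?_ (hxnn n')
        have h12 : 0 < Bmin * E0 := mul_pos hBmin_pos (by linarith)
        linarith
      linarith [hfin, hk2, hnum, hlow]
    exact ⟨M, by linarith, 0, fun n _ => main n⟩
  · -- Iβ empty: all β on [1,k] vanish
    rw [Finset.not_nonempty_iff_eq_empty] at hne
    have hβ0 : ∀ i ∈ Icc 1 k, β i = 0 := by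
      intro i hi
      by_contra h0
      have hpos : 0 < β i := lt_of_le_of_ne (hβ i) (Ne.symm h0)
      have hmem : i ∈ indexSet k β := Finset.mem_filter.mpr ⟨hi, hpos⟩
      rw [hne] at hmem
      exact absurd hmem (Finset.notMem_empty i)
    have hsum0 : ∀ n : ℕ, ∑ i ∈ Icc 1 k, β i * x (n - i) = 0 := by
      intro n
      apply Finset.sum_eq_zero
      intro i hi
      rw [hβ0 i hi, zero_mul]
    have hbd : ∀ n, k ≤ n → x n ≤ C0 / A := by
      intro n hn
      have h1 := key1 n hn
      rw [hsum0 n] at h1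
      rw [le_div_iff₀ hApos]
      linarith
    have hCA : 0 ≤ C0 / A := by positivity
    refine ⟨(Finset.range k).sup' ⟨0, Finset.mem_range.mpr hk⟩ x + C0 / A + 1, ?_, 0, ?_⟩
    · have := le_trans (hxnn 0) (Finset.le_sup' x (Finset.mem_range.mpr hk))
      linarith
    intro n _
    by_cases hn : n < k
    · have h1 := Finset.le_sup' x (Finset.mem_range.mpr hn)
      linarith
    · push_neg at hn
      have h1 := hbd n hn
      have h2 := le_trans (hxnn 0) (Finset.le_sup' x (Finset.mem_range.mpr hk))
      linarith
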